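/- For any matrices R₁, R₂, R₃ ∈ SO(3), the inequality (1/2)·tr(R₁ᵀR₂ − R₁ᵀR₃R₂ᵀR₃) ≥ φ(R₁ᵀR₃) − φ(R₁ᵀR₂) + λ_min(sym(R₁ᵀR₃))·φ(R₃ᵀR₂) holds, where φ(R) := tr(I₃ − R), sym(M) := (M + Mᵀ)/2, and λ_min(M) is the smallest eigenvalue of M. -/

import Mathlib

open Matrix BigOperators

def IsSO3 (R : Matrix (Fin 3) (Fin 3) ℝ) : Prop :=
  Rᵀ * R = 1 ∧ R * Rᵀ = 1 ∧ R.det = 1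

noncomputable def phi (R : Matrix (Fin 3) (Fin 3) ℝ) : ℝ :=
  Matrix.trace ((1 : Matrix (Fin 3) (Fin 3) ℝ) - R)

noncomputable def frobSq (M : Matrix (Fin 3) (Fin 3) ℝ) : ℝ := Matrix.trace (Mᵀ * M)

def hat (a : Fin 3 → ℝ) : Matrix (Fin 3) (Fin 3) ℝ :=
  !![0, -a 2, a 1; a 2, 0, -a 0; -a 1, a 0, 0]

def vee (M : Matrix (Fin 3) (Fin 3) ℝ) : Fin 3 → ℝ := ![M 2 1, M 0 2, M 1 0]

noncomputable def skw (M : Matrix (Fin 3) (Fin 3) ℝ) : Matrix (Fin 3) (Fin 3) ℝ :=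
  (1/2 : ℝ) • (M - Mᵀ)

noncomputable def eR (M : Matrix (Fin 3) (Fin 3) ℝ) : Fin 3 → ℝ := vee (skw M)

noncomputable def symPart (M : Matrix (Fin 3) (Fin 3) ℝ) : Matrix (Fin 3) (Fin 3) ℝ :=
  (1/2 : ℝ) • (M + Mᵀ)

noncomputable def lambdaMin (M : Matrix (Fin 3) (Fin 3) ℝ) : ℝ :=
  sInf {μ : ℝ | ∃ v : Fin 3 → ℝ, v ≠ 0 ∧ M.mulVec v = μ • v}

/-! ### Auxiliary lemmas -/

lemma dotProduct_self_nonneg' {n : Type*} [Fintype n] (v : n → ℝ) : 0 ≤ v ⬝ᵥ v :=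
  Finset.sum_nonneg fun i _ => mul_self_nonneg (v i)

open scoped MatrixOrder in
lemma trace_mul_psd_nonneg {n : Type*} [Fintype n] [DecidableEq n] {S P : Matrix n n ℝ}
    (hS : S.PosSemidef) (hP : P.PosSemidef) : 0 ≤ (S * P).trace := by
  obtain ⟨B, rfl⟩ := CStarAlgebra.nonneg_iff_eq_star_mul_self.mp hP.nonneg
  rw [← mul_assoc, trace_mul_cycle]
  have h := hS.mul_mul_conjTranspose_same B
  exact Finset.sum_nonneg fun i _ => by
    have := h.dotProduct_mulVec_nonneg (Pi.single i 1)
    simpa [dotProduct, mulVec, Pi.single_apply, Matrix.star_eq_conjTranspose] using this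

lemma symPart_isHermitian (M : Matrix (Fin 3) (Fin 3) ℝ) : (symPart M).IsHermitian := by
  unfold Matrix.IsHermitian symPart
  ext i k
  simp [conjTranspose_apply, add_comm]
  ring

lemma lambdaMin_psd {S : Matrix (Fin 3) (Fin 3) ℝ} (hS : S.IsHermitian) :
    PosSemidef (S - lambdaMin S • 1) := by
  classical
  set E := {μ : ℝ | ∃ v : Fin 3 → ℝ, v ≠ 0 ∧ S.mulVec v = μ • v} with hE
  set μ0 : ℝ := Finset.univ.inf' Finset.univ_nonempty hS.eigenvalues with hμ0
  obtain ⟨j, -, hj⟩ := Finset.exists_mem_eq_inf' (Finset.univ_nonempty) hS.eigenvalues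
  have hPSD : PosSemidef (S - μ0 • 1) := by
    have hdiag : (0 : Fin 3 → ℝ) ≤ fun i => hS.eigenvalues i - μ0 := fun i =>
      sub_nonneg.mpr (Finset.inf'_le hS.eigenvalues (Finset.mem_univ i))
    have key : S - μ0 • 1 =
        (hS.eigenvectorUnitary : Matrix (Fin 3) (Fin 3) ℝ) *
          diagonal (fun i => hS.eigenvalues i - μ0) *
          star (hS.eigenvectorUnitary : Matrix (Fin 3) (Fin 3) ℝ) := by
      have hU : (hS.eigenvectorUnitary : Matrix (Fin 3) (Fin 3) ℝ) *
          star (hS.eigenvectorUnitary : Matrix (Fin 3) (Fin 3) ℝ) = 1 :=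
        Matrix.mem_unitaryGroup_iff.mp hS.eigenvectorUnitary.2
      have hspec := hS.spectral_theorem
      have hd : diagonal (fun i => hS.eigenvalues i - μ0) =
          diagonal (RCLike.ofReal ∘ hS.eigenvalues) - μ0 • (1 : Matrix (Fin 3) (Fin 3) ℝ) := by
        ext i k
        by_cases h : i = k <;> simp [h, diagonal, Matrix.one_apply, Matrix.smul_apply]
      rw [Unitary.conjStarAlgAut_apply] at hspec
      rw [hd, mul_sub, sub_mul, ← hspec]
      congr 1
      rw [mul_smul_comm, smul_mul_assoc, mul_one, hU]
    rw [key]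
    exact (PosSemidef.diagonal hdiag).mul_mul_conjTranspose_same _
  have hmem : μ0 ∈ E := by
    refine ⟨(WithLp.equiv 2 _) (hS.eigenvectorBasis j), ?_, ?_⟩
    · intro h
      exact hS.eigenvectorBasis.orthonormal.ne_zero j
        ((WithLp.equiv 2 _).injective (by simpa using h))
    · rw [show μ0 = hS.eigenvalues j from hj]
      exact hS.mulVec_eigenvectorBasis j
  have hlb : ∀ μ ∈ E, μ0 ≤ μ := by
    rintro μ ⟨v, hv, hMv⟩
    have h0 := hPSD.dotProduct_mulVec_nonneg v
    have hvv : 0 < v ⬝ᵥ v := by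
      rcases lt_or_eq_of_le (dotProduct_self_nonneg' v) with h | h
      · exact h
      · exact absurd ((dotProduct_self_eq_zero).mp h.symm) hv
    have hexp : star v ⬝ᵥ (S - μ0 • 1) *ᵥ v = (μ - μ0) * (v ⬝ᵥ v) := by
      rw [sub_mulVec, hMv, smul_mulVec, one_mulVec, star_trivial,
        dotProduct_sub, dotProduct_smul, dotProduct_smul]
      simp [smul_eq_mul]; ring
    rw [hexp] at h0
    by_contra hcon
    push_neg at hcon
    nlinarith
  have : lambdaMin S = μ0 :=
    le_antisymm (csInf_le ⟨μ0, hlb⟩ hmem) (le_csInf ⟨μ0, hmem⟩ hlb)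
  rw [lambdaMin] at this ⊢
  rw [← hE] at this ⊢
  rw [this]
  exact hPSD

lemma trace_tt (X Y : Matrix (Fin 3) (Fin 3) ℝ) :
    Matrix.trace (Xᵀ * Yᵀ) = Matrix.trace (X * Y) := by
  rw [← Matrix.trace_transpose (X * Y), Matrix.transpose_mul, Matrix.trace_mul_comm]

lemma trace_t (X Y : Matrix (Fin 3) (Fin 3) ℝ) :
    Matrix.trace (Xᵀ * Y) = Matrix.trace (X * Yᵀ) := by
  rw [← Matrix.trace_transpose (X * Yᵀ), Matrix.transpose_mul,
    Matrix.transpose_transpose, Matrix.trace_mul_comm]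

lemma psd_one_sub_sym {B : Matrix (Fin 3) (Fin 3) ℝ} (hB : Bᵀ * B = 1) :
    PosSemidef (1 - symPart B) := by
  refine PosSemidef.of_dotProduct_mulVec_nonneg ((isHermitian_one).sub (symPart_isHermitian B)) fun x => ?_
  set y := B *ᵥ x with hy
  have hyy : y ⬝ᵥ y = x ⬝ᵥ x := by
    have h1 : x ⬝ᵥ ((Bᵀ * B) *ᵥ x) = y ⬝ᵥ y := by
      rw [← mulVec_mulVec, dotProduct_mulVec, vecMul_transpose, dotProduct_comm]
    rw [hB, one_mulVec] at h1
    rw [← h1]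
  have am : 0 ≤ (x - y) ⬝ᵥ (x - y) := dotProduct_self_nonneg' _
  have hsym : x ⬝ᵥ (symPart B *ᵥ x) = x ⬝ᵥ y := by
    rw [symPart, smul_mulVec, add_mulVec, dotProduct_smul, dotProduct_add]
    have : x ⬝ᵥ (Bᵀ *ᵥ x) = y ⬝ᵥ x := by
      rw [dotProduct_mulVec, vecMul_transpose]
    rw [this, dotProduct_comm y x, ← hy]
    simp [smul_eq_mul]; ring
  have hexp : star x ⬝ᵥ ((1 - symPart B) *ᵥ x) = x ⬝ᵥ x - x ⬝ᵥ y := by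
    rw [star_trivial, sub_mulVec, one_mulVec, dotProduct_sub, hsym]
  rw [hexp]
  rw [sub_dotProduct, dotProduct_sub, dotProduct_sub, dotProduct_comm y x] at am
  linarith

theorem key_sym_inequality (R₁ R₂ R₃ : Matrix (Fin 3) (Fin 3) ℝ)
    (h1 : IsSO3 R₁) (h2 : IsSO3 R₂) (h3 : IsSO3 R₃) :
    (1/2 : ℝ) * Matrix.trace (R₁ᵀ * R₂ - R₁ᵀ * R₃ * R₂ᵀ * R₃) ≥
      phi (R₁ᵀ * R₃) - phi (R₁ᵀ * R₂) +
        lambdaMin (symPart (R₁ᵀ * R₃)) * phi (R₃ᵀ * R₂) := by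
  obtain ⟨h2a, h2b, -⟩ := h2
  obtain ⟨h3a, h3b, -⟩ := h3
  set A := R₁ᵀ * R₃ with hA
  set B := R₃ᵀ * R₂ with hB
  have hAB : R₁ᵀ * R₂ = A * B := by
    rw [hA, hB, mul_assoc, ← mul_assoc R₃, h3b, one_mul]
  have hABt : R₁ᵀ * R₃ * R₂ᵀ * R₃ = A * Bᵀ := by
    rw [hB, Matrix.transpose_mul, Matrix.transpose_transpose, ← mul_assoc]
  have hBtB : Bᵀ * B = 1 := by
    rw [hB, Matrix.transpose_mul, Matrix.transpose_transpose, mul_assoc,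
      ← mul_assoc R₃, h3b, one_mul, h2a]
  set S := symPart A with hSdef
  set lam := lambdaMin S with hlam
  have hP : PosSemidef (1 - symPart B) := psd_one_sub_sym hBtB
  have hPS : PosSemidef (S - lam • 1) := lambdaMin_psd (symPart_isHermitian A)
  have key : 0 ≤ ((S - lam • 1) * (1 - symPart B)).trace :=
    trace_mul_psd_nonneg hPS hP
  -- trace identities
  have trAt : Matrix.trace (Aᵀ) = Matrix.trace A := Matrix.trace_transpose A
  have trBt : Matrix.trace (Bᵀ) = Matrix.trace B := Matrix.trace_transpose B
  have trAtBt : Matrix.trace (Aᵀ * Bᵀ) = Matrix.trace (A * B) := trace_tt A B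
  have trAtB : Matrix.trace (Aᵀ * B) = Matrix.trace (A * Bᵀ) := trace_t A B
  have expand : ((S - lam • 1) * (1 - symPart B)).trace =
      Matrix.trace A - (Matrix.trace (A * B) + Matrix.trace (A * Bᵀ)) / 2
        - lam * (3 - Matrix.trace B) := by
    rw [hSdef, symPart, symPart]
    simp only [Matrix.mul_sub, Matrix.sub_mul, Matrix.mul_one, Matrix.one_mul,
      Matrix.smul_mul, Matrix.mul_smul, Matrix.trace_sub, Matrix.trace_smul,
      Matrix.trace_add, Matrix.add_mul, Matrix.mul_add, Matrix.trace_one,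
      smul_eq_mul, trAt, trAtBt, trAtB, trBt, Fintype.card_fin]
    push_cast
    ring
  rw [expand] at key
  have phi_eq : ∀ X : Matrix (Fin 3) (Fin 3) ℝ, phi X = 3 - Matrix.trace X := by
    intro X
    rw [phi, Matrix.trace_sub, Matrix.trace_one]
    norm_num
  rw [hAB, hABt, Matrix.trace_sub, phi_eq, phi_eq, phi_eq]
  linarith
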